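/- For every irrational real number θ there exist infinitely many pairs of integers (k₁, k₂) with k₂ > 0 such that |θ − k₁/k₂| ≤ 1/(√5·k₂²). -/

import Mathlib

namespace HW

variable (θ : ℝ)

/-- complete quotients -/
noncomputable def t : ℕ → ℝ
  | 0 => θ
  | n + 1 => (Int.fract (t n))⁻¹

/-- partial quotients -/
noncomputable def a (n : ℕ) : ℤ := ⌊t θ n⌋

/-- convergent numerators, shifted by one -/
noncomputable def H : ℕ → ℤ
  | 0 => 1
  | 1 => a θ 0
  | n + 2 => a θ (n + 1) * H (n + 1) + H n

/-- convergent denominators, shifted by one -/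
noncomputable def K : ℕ → ℤ
  | 0 => 0
  | 1 => 1
  | n + 2 => a θ (n + 1) * K (n + 1) + K n

variable {θ}

theorem irr_t (hθ : Irrational θ) (n : ℕ) : Irrational (t θ n) := by
  induction n with
  | zero => exact hθ
  | succ n ih =>
    show Irrational (Int.fract (t θ n))⁻¹
    have h : Irrational (t θ n - ⌊t θ n⌋) := ih.sub_intCast _
    rw [Int.self_sub_floor] at h
    exact h.inv

theorem fract_pos (hθ : Irrational θ) (n : ℕ) : 0 < Int.fract (t θ n) := by
  have h : Irrational (Int.fract (t θ n)) := by
    rw [← Int.self_sub_floor]; exact (irr_t hθ n).sub_intCast _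
  exact lt_of_le_of_ne (Int.fract_nonneg _) (Ne.symm h.ne_zero)

theorem t_gt_one (hθ : Irrational θ) (n : ℕ) : 1 < t θ (n + 1) := by
  show 1 < (Int.fract (t θ n))⁻¹
  rw [lt_inv_comm₀ one_pos (fract_pos hθ n)]
  simpa using Int.fract_lt_one (t θ n)

theorem t_pos (hθ : Irrational θ) (n : ℕ) : 0 < t θ (n + 1) :=
  lt_trans one_pos (t_gt_one hθ n)

theorem one_le_a (hθ : Irrational θ) (n : ℕ) : 1 ≤ a θ (n + 1) := by
  rw [a, Int.le_floor]
  exact_mod_cast (t_gt_one hθ n).le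

/-- key relation: `(t n - a n) * t (n+1) = 1` -/
theorem t_rel (hθ : Irrational θ) (n : ℕ) : (t θ n - (a θ n : ℝ)) * t θ (n + 1) = 1 := by
  have h : t θ (n + 1) = (Int.fract (t θ n))⁻¹ := rfl
  have hp := fract_pos hθ n
  rw [← Int.self_sub_floor] at hp
  rw [h, ← Int.self_sub_floor]
  exact mul_inv_cancel₀ (ne_of_gt hp)

theorem K_nonneg (hθ : Irrational θ) : ∀ n, 0 ≤ K θ n ∧ 0 ≤ K θ (n + 1)
  | 0 => ⟨le_refl 0, zero_le_one⟩
  | n + 1 => by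
    obtain ⟨h1, h2⟩ := K_nonneg hθ n
    refine ⟨h2, ?_⟩
    show 0 ≤ a θ (n + 1) * K θ (n + 1) + K θ n
    have := one_le_a hθ n
    nlinarith

theorem one_le_K (hθ : Irrational θ) : ∀ n, 1 ≤ K θ (n + 1)
  | 0 => le_refl 1
  | n + 1 => by
    show 1 ≤ a θ (n + 1) * K θ (n + 1) + K θ n
    have h1 := one_le_K hθ n
    have h2 := (K_nonneg hθ n).1
    have h3 := one_le_a hθ n
    nlinarith

theorem K_mono (hθ : Irrational θ) : ∀ n, K θ n ≤ K θ (n + 1)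
  | 0 => zero_le_one
  | n + 1 => by
    show K θ (n + 1) ≤ a θ (n + 1) * K θ (n + 1) + K θ n
    have h1 := one_le_K hθ n
    have h2 := (K_nonneg hθ n).1
    have h3 := one_le_a hθ n
    nlinarith

theorem K_ge (hθ : Irrational θ) : ∀ n : ℕ, (n : ℤ) ≤ K θ (n + 1)
  | 0 => by exact le_trans (by norm_num) (one_le_K hθ 0)
  | 1 => by simpa using one_le_K hθ 1
  | n + 2 => by
    show ((n : ℤ) + 2) ≤ a θ (n + 2) * K θ (n + 2) + K θ (n + 1)
    have h1 := K_ge hθ (n + 1)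
    have h2 := one_le_K hθ n
    have h3 := one_le_a hθ (n + 1)
    have h4 := one_le_K hθ (n + 1)
    push_cast at h1 ⊢
    nlinarith

/-- the fundamental identity -/
theorem theta_eq (hθ : Irrational θ) : ∀ n : ℕ,
    θ * (t θ (n + 1) * (K θ (n + 1) : ℝ) + (K θ n : ℝ))
      = t θ (n + 1) * (H θ (n + 1) : ℝ) + (H θ n : ℝ)
  | 0 => by
    have h := t_rel hθ 0
    show θ * (t θ 1 * ((1 : ℤ) : ℝ) + ((0 : ℤ) : ℝ)) = t θ 1 * ((a θ 0 : ℤ) : ℝ) + ((1 : ℤ) : ℝ)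
    have ht0 : t θ 0 = θ := rfl
    push_cast
    rw [ht0] at h
    linear_combination h
  | n + 1 => by
    have ih := theta_eq hθ n
    have h := t_rel hθ (n + 1)
    have hH : (H θ (n + 2) : ℝ) = (a θ (n + 1) : ℝ) * (H θ (n + 1) : ℝ) + (H θ n : ℝ) := by
      show ((a θ (n + 1) * H θ (n + 1) + H θ n : ℤ) : ℝ) = _
      push_cast; ring
    have hK : (K θ (n + 2) : ℝ) = (a θ (n + 1) : ℝ) * (K θ (n + 1) : ℝ) + (K θ n : ℝ) := by
      show ((a θ (n + 1) * K θ (n + 1) + K θ n : ℤ) : ℝ) = _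
      push_cast; ring
    rw [hH, hK]
    linear_combination t θ (n + 2) * ih + ((H θ (n + 1) : ℝ) - θ * (K θ (n + 1) : ℝ)) * h

theorem det (hθ : Irrational θ) : ∀ n : ℕ,
    H θ (n + 1) * K θ n - H θ n * K θ (n + 1) = (-1) ^ (n + 1)
  | 0 => by simp [H, K]
  | n + 1 => by
    have ih := det hθ n
    show (a θ (n + 1) * H θ (n + 1) + H θ n) * K θ (n + 1)
        - H θ (n + 1) * (a θ (n + 1) * K θ (n + 1) + K θ n) = (-1) ^ (n + 2)
    have : (-1 : ℤ) ^ (n + 2) = -(-1) ^ (n + 1) := by ring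
    rw [this]
    linear_combination -ih

theorem D_pos (hθ : Irrational θ) (n : ℕ) :
    0 < t θ (n + 1) * (K θ (n + 1) : ℝ) + (K θ n : ℝ) := by
  have h1 := t_pos hθ n
  have h2 : (1 : ℝ) ≤ (K θ (n + 1) : ℝ) := by exact_mod_cast one_le_K hθ n
  have h3 : (0 : ℝ) ≤ (K θ n : ℝ) := by exact_mod_cast (K_nonneg hθ n).1
  nlinarith

/-- error formula -/
theorem err (hθ : Irrational θ) (n : ℕ) :
    |θ - (H θ (n + 1) : ℝ) / (K θ (n + 1) : ℝ)|
      = 1 / ((t θ (n + 1) * (K θ (n + 1) : ℝ) + (K θ n : ℝ)) * (K θ (n + 1) : ℝ)) := by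
  have hK : (0 : ℝ) < (K θ (n + 1) : ℝ) := by
    exact_mod_cast lt_of_lt_of_le zero_lt_one (one_le_K hθ n)
  have hD := D_pos hθ n
  have hdet : (H θ (n + 1) : ℝ) * (K θ n : ℝ) - (H θ n : ℝ) * (K θ (n + 1) : ℝ)
      = (-1 : ℝ) ^ (n + 1) := by exact_mod_cast congrArg (Int.cast : ℤ → ℝ) (det hθ n)
  have hth := theta_eq hθ n
  have key : θ - (H θ (n + 1) : ℝ) / (K θ (n + 1) : ℝ)
      = -(-1 : ℝ) ^ (n + 1) / ((t θ (n + 1) * (K θ (n + 1) : ℝ) + (K θ n : ℝ)) * (K θ (n + 1) : ℝ)) := by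
    rw [eq_div_iff (by positivity), sub_mul]
    have h : (H θ (n + 1) : ℝ) / (K θ (n + 1) : ℝ)
        * ((t θ (n + 1) * (K θ (n + 1) : ℝ) + (K θ n : ℝ)) * (K θ (n + 1) : ℝ))
        = (H θ (n + 1) : ℝ) * (t θ (n + 1) * (K θ (n + 1) : ℝ) + (K θ n : ℝ)) := by
      field_simp
    rw [h]
    linear_combination (K θ (n + 1) : ℝ) * hth - hdet
  rw [key, abs_div, abs_neg, abs_pow, abs_neg, abs_one, one_pow,
    abs_of_pos (by positivity)]

set_option maxHeartbeats 2000000 in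
/-- among any three consecutive indices, one is good -/
theorem triple (hθ : Irrational θ) (n : ℕ) :
    ∃ m, n ≤ m ∧ Real.sqrt 5 ≤ t θ (m + 1) + (K θ m : ℝ) / (K θ (m + 1) : ℝ) := by
  by_contra hcon
  push_neg at hcon
  set s := Real.sqrt 5 with hs
  have hs5 : s ^ 2 = 5 := Real.sq_sqrt (by norm_num)
  have hs2 : 2 < s := by nlinarith [Real.sqrt_nonneg 5, hs5]
  clear_value s
  have hKpos : ∀ m : ℕ, (0 : ℝ) < (K θ (m + 1) : ℝ) := fun m => by
    exact_mod_cast lt_of_lt_of_le zero_lt_one (one_le_K hθ m)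
  have hKnn : ∀ m : ℕ, (0 : ℝ) ≤ (K θ m : ℝ) := fun m => by
    exact_mod_cast (K_nonneg hθ m).1
  -- the key step: from bad at i and i+1, β_{i+1} > (s-1)/2
  have step : ∀ i, n ≤ i →
      (s - 1) / 2 < (K θ (i + 1) : ℝ) / (K θ (i + 2) : ℝ) := by
    intro i hi
    have h1 := hcon i hi
    have h2 := hcon (i + 1) (le_trans hi (Nat.le_succ i))
    set α := t θ (i + 2) with hα
    set β := (K θ (i + 1) : ℝ) / (K θ (i + 2) : ℝ) with hβ
    have hα1 : 1 < α := t_gt_one hθ (i + 1)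
    have hα0 : 0 < α := by linarith
    have hβ0 : 0 < β := div_pos (hKpos i) (hKpos (i + 1))
    -- relation: 1/α + 1/β = t θ (i+1) + K i / K (i+1) < s
    have hrel : 1 / α + 1 / β < s := by
      have htr := t_rel hθ (i + 1)
      have h1α : 1 / α = t θ (i + 1) - (a θ (i + 1) : ℝ) := by
        rw [eq_comm, eq_div_iff (ne_of_gt hα0)]
        linarith [htr]
      have hKrec : (K θ (i + 2) : ℝ) = (a θ (i + 1) : ℝ) * (K θ (i + 1) : ℝ) + (K θ i : ℝ) := by
        show ((a θ (i + 1) * K θ (i + 1) + K θ i : ℤ) : ℝ) = _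
        push_cast; ring
      have h1β : 1 / β = (a θ (i + 1) : ℝ) + (K θ i : ℝ) / (K θ (i + 1) : ℝ) := by
        rw [hβ, one_div_div, hKrec, add_div, mul_div_assoc,
          div_self (ne_of_gt (hKpos i)), mul_one]
      rw [h1α, h1β]
      calc t θ (i + 1) - (a θ (i + 1) : ℝ) + ((a θ (i + 1) : ℝ) + (K θ i : ℝ) / (K θ (i + 1) : ℝ))
          = t θ (i + 1) + (K θ i : ℝ) / (K θ (i + 1) : ℝ) := by ring
        _ < s := h1
    -- now α + β < s and 1/α + 1/β < s force β > (s-1)/2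
    have hαβ : α + β < s := h2
    clear_value α β
    have hm : α + β < s * (α * β) := by
      rw [div_add_div _ _ (ne_of_gt hα0) (ne_of_gt hβ0),
        div_lt_iff₀ (by positivity)] at hrel
      nlinarith [hrel]
    have hsβ : 1 < s * β := by
      have hβs : 1 / β < s := by
        have : 0 < 1 / α := by positivity
        linarith
      rw [div_lt_iff₀ hβ0] at hβs
      linarith
    have key1 : β < (s - β) * (s * β - 1) := by
      have e1 : β < α * (s * β - 1) := by nlinarith [hm]
      have e2 : α * (s * β - 1) < (s - β) * (s * β - 1) :=
        mul_lt_mul_of_pos_right (by linarith) (by linarith)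
      linarith
    by_contra hc
    push_neg at hc
    have spos : (0 : ℝ) < s := by linarith
    have key1' : s * β < (5 - s * β) * (s * β - 1) := by
      nlinarith [mul_lt_mul_of_pos_left key1 spos, hs5, hβ0, hsβ]
    have hu3 : (s * β - 1) ^ 2 - 3 * (s * β - 1) + 1 < 0 := by nlinarith [key1']
    have hu1 : s * β - 1 ≤ (3 - s) / 2 := by nlinarith [hc, hs5, hs2, hβ0]
    have hu2 : s * β - 1 < (3 + s) / 2 := by nlinarith [hc, hs5, hs2, hβ0]
    nlinarith [hu3, mul_nonneg (by linarith : (0:ℝ) ≤ (3 - s) / 2 - (s * β - 1))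
      (by linarith : (0:ℝ) ≤ (3 + s) / 2 - (s * β - 1))]
  -- apply step at n and n+1 and derive a contradiction
  have hA : (s - 1) / 2 < (K θ (n + 1) : ℝ) / (K θ (n + 2) : ℝ) := step n (le_refl n)
  have hB : (s - 1) / 2 < (K θ (n + 2) : ℝ) / (K θ (n + 3) : ℝ) := step (n + 1) (Nat.le_succ n)
  have hKrec2 : (K θ (n + 3) : ℝ) = (a θ (n + 2) : ℝ) * (K θ (n + 2) : ℝ) + (K θ (n + 1) : ℝ) := by
    show ((a θ (n + 2) * K θ (n + 2) + K θ (n + 1) : ℤ) : ℝ) = _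
    push_cast; ring
  have ha2 : (1 : ℝ) ≤ (a θ (n + 2) : ℝ) := by exact_mod_cast one_le_a hθ (n + 1)
  have h1 : (0 : ℝ) < (K θ (n + 1) : ℝ) := hKpos n
  have h2 : (0 : ℝ) < (K θ (n + 2) : ℝ) := hKpos (n + 1)
  have h3 : (0 : ℝ) < (K θ (n + 3) : ℝ) := hKpos (n + 2)
  have hA' : (s - 1) / 2 * (K θ (n + 2) : ℝ) < (K θ (n + 1) : ℝ) := by
    rw [lt_div_iff₀ h2] at hA; linarith
  have hB' : (s - 1) / 2 * (K θ (n + 3) : ℝ) < (K θ (n + 2) : ℝ) := by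
    rw [lt_div_iff₀ h3] at hB; linarith
  nlinarith [hA', hB', hKrec2, ha2, h1, h2, h3, hs5, hs2]

theorem good (hθ : Irrational θ) (m : ℕ)
    (hg : Real.sqrt 5 ≤ t θ (m + 1) + (K θ m : ℝ) / (K θ (m + 1) : ℝ)) :
    |θ - (H θ (m + 1) : ℝ) / (K θ (m + 1) : ℝ)|
      ≤ 1 / (Real.sqrt 5 * (K θ (m + 1) : ℝ) ^ 2) := by
  have hK : (0 : ℝ) < (K θ (m + 1) : ℝ) := by
    exact_mod_cast lt_of_lt_of_le zero_lt_one (one_le_K hθ m)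
  rw [err hθ m]
  have hs : (0 : ℝ) < Real.sqrt 5 := Real.sqrt_pos.mpr (by norm_num)
  apply one_div_le_one_div_of_le (by positivity)
  have : Real.sqrt 5 * (K θ (m + 1) : ℝ) ^ 2
      ≤ (t θ (m + 1) + (K θ m : ℝ) / (K θ (m + 1) : ℝ)) * (K θ (m + 1) : ℝ) ^ 2 :=
    mul_le_mul_of_nonneg_right hg (by positivity)
  calc Real.sqrt 5 * (K θ (m + 1) : ℝ) ^ 2
      ≤ (t θ (m + 1) + (K θ m : ℝ) / (K θ (m + 1) : ℝ)) * (K θ (m + 1) : ℝ) ^ 2 := this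
    _ = (t θ (m + 1) * (K θ (m + 1) : ℝ) + (K θ m : ℝ)) * (K θ (m + 1) : ℝ) := by
        field_simp

end HW

/-- Hurwitz's theorem: for every irrational `θ` there are infinitely many pairs
`(k₁, k₂) ∈ ℤ²` with `k₂ > 0` and `|θ - k₁/k₂| ≤ 1/(√5 k₂²)`. -/
theorem stmt_13 (θ : ℝ) (hθ : Irrational θ) :
    {p : ℤ × ℤ | 0 < p.2 ∧ |θ - (p.1 : ℝ) / p.2| ≤ 1 / (Real.sqrt 5 * (p.2 : ℝ) ^ 2)}.Infinite := by
  set S := {p : ℤ × ℤ | 0 < p.2 ∧ |θ - (p.1 : ℝ) / p.2| ≤ 1 / (Real.sqrt 5 * (p.2 : ℝ) ^ 2)}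
    with hS
  by_contra hfin
  rw [Set.not_infinite] at hfin
  obtain ⟨b, hb⟩ := (hfin.image Prod.snd).bddAbove
  -- pick a good index m ≥ b.toNat + 1
  obtain ⟨m, hm, hg⟩ := HW.triple hθ (b.toNat + 1)
  have hKpos : 0 < HW.K θ (m + 1) := lt_of_lt_of_le zero_lt_one (HW.one_le_K hθ m)
  have hmem : (HW.H θ (m + 1), HW.K θ (m + 1)) ∈ S := ⟨hKpos, HW.good hθ m hg⟩
  have hle : HW.K θ (m + 1) ≤ b := hb ⟨(HW.H θ (m + 1), HW.K θ (m + 1)), hmem, rfl⟩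
  have h1 : (m : ℤ) ≤ HW.K θ (m + 1) := HW.K_ge hθ m
  have h2 : (b.toNat + 1 : ℤ) ≤ (m : ℤ) := by exact_mod_cast hm
  have h3 : b ≤ (b.toNat : ℤ) := Int.self_le_toNat b
  omega
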